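/- Let G be a dually chordal graph (G has a spanning tree T such that for every edge uv of G every internal vertex of the T-path from u to v is adjacent to both u and v). If G is 3-colourable, then G contains no odd induced cycle of length at least 5 and no induced complement of a cycle of length at least 5; consequently (by the Strong Perfect Graph Theorem) G is perfect. -/

import Mathlib

open SimpleGraph

/-- `f` describes a chordless (induced) cycle on `k` vertices in `G`. -/
def IsInducedCycleOn {V : Type*} (G : SimpleGraph V) {k : ℕ} (f : ZMod k → V) : Prop :=
  Function.Injective f ∧ ∀ i j : ZMod k, G.Adj (f i) (f j) ↔ (j = i + 1 ∨ i = j + 1)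

/-- `f` describes an induced copy of the complement of a cycle on `k` vertices in `G`. -/
def IsInducedAnticycleOn {V : Type*} (G : SimpleGraph V) {k : ℕ} (f : ZMod k → V) : Prop :=
  Function.Injective f ∧
    ∀ i j : ZMod k, G.Adj (f i) (f j) ↔ (i ≠ j ∧ ¬ (j = i + 1 ∨ i = j + 1))

/-- A graph is perfect if every induced subgraph has chromatic number
equal to its clique number. -/
def IsPerfect {V : Type*} (G : SimpleGraph V) : Prop :=
  ∀ s : Set V, (G.induce s).chromaticNumber = ((G.induce s).cliqueNum : ℕ∞)

set_option linter.unusedSectionVars false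
set_option maxHeartbeats 1000000

section TreeFacts
variable {V : Type*} [DecidableEq V] {T : SimpleGraph V}

lemma tree_walk_len (ht : T.IsTree) {u v : V} (p : T.Walk u v) (hp : p.IsPath) :
    p.length = T.dist u v := by
  obtain ⟨q, hq, hlen⟩ := ht.isConnected.exists_path_of_dist u v
  have h2 : (⟨p, hp⟩ : T.Path u v) = ⟨q, hq⟩ := ht.IsAcyclic.path_unique _ _
  rw [← hlen]
  exact congrArg Walk.length (congrArg Subtype.val h2)

lemma tree_adj_dist (ht : T.IsTree) (r : V) {x y : V} (h : T.Adj x y) :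
    T.dist y r = T.dist x r + 1 ∨ T.dist x r = T.dist y r + 1 := by
  obtain ⟨p, hp, hlen⟩ := ht.isConnected.exists_path_of_dist x r
  by_cases hy : y ∈ p.support
  · right
    have h1 : T.dist x y = 1 := by rw [dist_eq_one_iff_adj]; exact h
    have ht1 : T.dist x y ≤ (p.takeUntil y hy).length := dist_le _
    have ht2 : T.dist y r ≤ (p.dropUntil y hy).length := dist_le _
    have hsum : (p.takeUntil y hy).length + (p.dropUntil y hy).length = p.length := by
      rw [← Walk.length_append, Walk.take_spec]
    have htri : T.dist x r ≤ T.dist x y + T.dist y r := ht.isConnected.dist_triangle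
    omega
  · left
    have hw : (Walk.cons h.symm p).IsPath := (Walk.cons_isPath_iff _ _).mpr ⟨hp, hy⟩
    have := tree_walk_len ht _ hw
    simp only [Walk.length_cons] at this
    omega

lemma tree_parent_unique (ht : T.IsTree) (r : V) {x a b : V} (ha : T.Adj x a) (hb : T.Adj x b)
    (hda : T.dist a r + 1 = T.dist x r) (hdb : T.dist b r + 1 = T.dist x r) : a = b := by
  have key : ∀ c : V, T.Adj x c → T.dist c r + 1 = T.dist x r →
      ∃ (w : T.Walk x r) (hw : w.IsPath), w.getVert 1 = c := by
    intro c hc hdc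
    obtain ⟨p, hp, hlen⟩ := ht.isConnected.exists_path_of_dist c r
    have hx : x ∉ p.support := by
      intro hx
      have h1 : T.dist c x = 1 := by rw [dist_eq_one_iff_adj]; exact hc.symm
      have ht1 : T.dist c x ≤ (p.takeUntil x hx).length := dist_le _
      have ht2 : T.dist x r ≤ (p.dropUntil x hx).length := dist_le _
      have hsum : (p.takeUntil x hx).length + (p.dropUntil x hx).length = p.length := by
        rw [← Walk.length_append, Walk.take_spec]
      omega
    exact ⟨Walk.cons hc p, (Walk.cons_isPath_iff _ _).mpr ⟨hp, hx⟩,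
      by simp⟩
  obtain ⟨wa, hwa, hga⟩ := key a ha hda
  obtain ⟨wb, hwb, hgb⟩ := key b hb hdb
  have h2 : (⟨wa, hwa⟩ : T.Path x r) = ⟨wb, hwb⟩ := ht.IsAcyclic.path_unique _ _
  have h3 : wa = wb := congrArg Subtype.val h2
  rw [← hga, ← hgb, h3]

end TreeFacts

lemma zmod_ne_zero (k n : ℕ) (h0 : 0 < n) (hk : n < k) : ((n : ℕ) : ZMod k) ≠ 0 := by
  haveI : NeZero k := ⟨by omega⟩
  intro h
  have h2 := (ZMod.natCast_eq_zero_iff n k).mp h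
  have := Nat.le_of_dvd h0 h2
  omega

section Dich
variable {V : Type*} [DecidableEq V] {G T : SimpleGraph V}

lemma edge_dichotomy (hsub : T ≤ G) (htree : T.IsTree)
    (hpath : ∀ u v : V, G.Adj u v → ∀ p : T.Path u v, ∀ w ∈ p.1.support,
      w ≠ u → w ≠ v → G.Adj u w ∧ G.Adj v w)
    (hfree : G.CliqueFree 4) {u v : V} (huv : G.Adj u v) :
    T.Adj u v ∨ ∃ m, T.Adj u m ∧ T.Adj m v ∧ G.Adj u m ∧ G.Adj v m := by
  obtain ⟨p, hp, -⟩ := htree.isConnected.exists_path_of_dist u v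
  cases p with
  | nil => exact absurd rfl huv.ne
  | cons h1 q =>
    rename_i x1 -- q : T.Walk x1 v, h1 : T.Adj u x1
    cases q with
    | nil => exact Or.inl h1
    | cons h2 q2 =>
      rename_i x2
      cases q2 with
      | nil =>
        -- u - x1 - v
        right
        refine ⟨x1, h1, h2, ?_⟩
        have hnd := hp.support_nodup
        simp only [Walk.support_cons, Walk.support_nil, List.nodup_cons, List.mem_cons,
          List.mem_singleton, List.not_mem_nil] at hnd
        have hx1u : x1 ≠ u := fun h => hnd.1 (Or.inl h.symm)
        have hx1v : x1 ≠ v := fun h => hnd.2.1 (by simp [h])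
        have := hpath u v huv ⟨_, hp⟩ x1 (by simp [Walk.support_cons]) hx1u hx1v
        exact this
      | cons h3 q3 =>
        rename_i x3
        exfalso
        have hvq : v ∈ q3.support := Walk.end_mem_support q3
        have hnd := hp.support_nodup
        simp only [Walk.support_cons, List.nodup_cons, List.mem_cons, not_or] at hnd
        obtain ⟨⟨hux1, hux2, huq⟩, ⟨hx12, hx1q⟩, ⟨hx2q, -⟩⟩ := hnd
        have hx1v : x1 ≠ v := fun h => hx1q (h ▸ hvq)
        have hx2v : x2 ≠ v := fun h => hx2q (h ▸ hvq)
        have hx1mem : x1 ∈ (Walk.cons h1 (Walk.cons h2 (Walk.cons h3 q3))).support := by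
          simp [Walk.support_cons]
        have hx2mem : x2 ∈ (Walk.cons h1 (Walk.cons h2 (Walk.cons h3 q3))).support := by
          simp [Walk.support_cons]
        obtain ⟨hGux1, hGvx1⟩ := hpath u v huv ⟨_, hp⟩ x1 hx1mem (Ne.symm hux1) hx1v
        obtain ⟨hGux2, hGvx2⟩ := hpath u v huv ⟨_, hp⟩ x2 hx2mem (Ne.symm hux2) hx2v
        have hGx12 : G.Adj x1 x2 := hsub h2
        have huvne : u ≠ v := huv.ne
        refine hfree {u, x1, x2, v} ⟨?_, ?_⟩
        · intro a ha b hb hab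
          simp only [Finset.coe_insert, Set.mem_insert_iff, Finset.coe_singleton,
            Set.mem_singleton_iff] at ha hb
          rcases ha with rfl|rfl|rfl|rfl <;> rcases hb with rfl|rfl|rfl|rfl <;>
            first
              | exact absurd rfl hab
              | exact huv | exact huv.symm
              | exact hGux1 | exact hGux1.symm
              | exact hGux2 | exact hGux2.symm
              | exact hGvx1 | exact hGvx1.symm
              | exact hGvx2 | exact hGvx2.symm
              | exact hGx12 | exact hGx12.symm
        · rw [Finset.card_insert_of_notMem (by simp [hux1, hux2, huvne]),
            Finset.card_insert_of_notMem (by simp [hx12, hx1v]),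
            Finset.card_insert_of_notMem (by simp [hx2v]),
            Finset.card_singleton]

end Dich
section Star
variable {V : Type*} [DecidableEq V] {G T : SimpleGraph V}

lemma star_of_hole (hsub : T ≤ G) (htree : T.IsTree)
    (hpath : ∀ u v : V, G.Adj u v → ∀ p : T.Path u v, ∀ w ∈ p.1.support,
      w ≠ u → w ≠ v → G.Adj u w ∧ G.Adj v w)
    (hfree : G.CliqueFree 4) {k : ℕ} (hk : 4 ≤ k) (f : ZMod k → V)
    (hf : IsInducedCycleOn G f) : ∃ a : V, ∀ i : ZMod k, T.Adj a (f i) := by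
  haveI : NeZero k := ⟨by omega⟩
  obtain ⟨hinj, hiff⟩ := hf
  have hone : (1 : ZMod k) ≠ 0 := by
    have := zmod_ne_zero k 1 (by omega) (by omega); simpa using this
  have htwo : (2 : ZMod k) ≠ 0 := by
    have := zmod_ne_zero k 2 (by omega) (by omega); simpa using this
  have hthree : (3 : ZMod k) ≠ 0 := by
    have := zmod_ne_zero k 3 (by omega) (by omega); simpa using this
  have hconsec : ∀ i : ZMod k, G.Adj (f i) (f (i + 1)) :=
    fun i => (hiff i (i + 1)).mpr (Or.inl rfl)
  have hnchord : ∀ i : ZMod k, ¬ G.Adj (f (i - 1)) (f (i + 1)) := by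
    intro i h
    rcases (hiff _ _).mp h with h' | h'
    · exact hone (by linear_combination h')
    · exact hthree (by linear_combination -h')
  set r : V := f 0 with hr
  set dep : V → ℕ := fun x => T.dist x r with hdep
  set h : ℕ := Finset.univ.sup (fun i : ZMod k => dep (f i)) with hmax
  have hle : ∀ i : ZMod k, dep (f i) ≤ h := fun i => Finset.le_sup (f := fun i : ZMod k => dep (f i)) (Finset.mem_univ i)
  have F1 : ∀ {x y : V}, T.Adj x y → dep y = dep x + 1 ∨ dep x = dep y + 1 :=
    fun hxy => tree_adj_dist htree r hxy
  have F2 : ∀ {x a b : V}, T.Adj x a → T.Adj x b → dep a + 1 = dep x → dep b + 1 = dep x →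
      a = b := fun ha hb hda hdb => tree_parent_unique htree r ha hb hda hdb
  obtain ⟨i0, -, hi0⟩ := Finset.exists_mem_eq_sup (Finset.univ : Finset (ZMod k))
    Finset.univ_nonempty (fun i : ZMod k => dep (f i))
  have hdeep0 : dep (f i0) = h := hi0.symm
  -- midpoints
  have hmid : ∀ i : ZMod k, ∃ x : V,
      (T.Adj (f i) (f (i + 1)) ∧ x = f i) ∨
      (T.Adj (f i) x ∧ T.Adj x (f (i + 1)) ∧ G.Adj (f i) x ∧ G.Adj x (f (i + 1))) := by
    intro i
    rcases edge_dichotomy hsub htree hpath hfree (hconsec i) with h' | ⟨mm, h1, h2, h3, h4⟩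
    · exact ⟨f i, Or.inl ⟨h', rfl⟩⟩
    · exact ⟨mm, Or.inr ⟨h1, h2, h3, h4.symm⟩⟩
  choose m hm using hmid
  have hshallow : ∀ x y z : V, T.Adj x z → T.Adj z y → x ≠ y → dep x = h → dep y ≤ h →
      dep z + 1 = h := by
    intro x y z hxz hzy hxy hx hy
    rcases F1 hxz with h1 | h1
    · rcases F1 hzy with h2 | h2
      · omega
      · exact absurd (F2 hxz.symm hzy (by omega) (by omega)) hxy
    · omega
  have hne11 : ∀ i : ZMod k, f i ≠ f (i + 1) := by
    intro i hcon
    exact hone (by linear_combination - hinj hcon)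
  have step5 : ∀ i : ZMod k, dep (f i) = h →
      m (i - 1) = m i ∧ T.Adj (m i) (f (i - 1)) ∧ T.Adj (m i) (f i) ∧
        T.Adj (m i) (f (i + 1)) ∧ dep (m i) + 1 = h := by
    intro i hdi
    have e1 : i - 1 + 1 = i := by ring
    have hL := hm (i - 1); rw [e1] at hL
    have hR := hm i
    have hprev : f (i - 1) ≠ f i := by
      intro hcon; exact hone (by linear_combination - (hinj hcon))
    have hd1L : ∀ (hL1 : T.Adj (f (i - 1)) (f i)), dep (f (i - 1)) + 1 = h := by
      intro hL1
      have := hle (i - 1)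
      rcases F1 hL1 with hh | hh <;> omega
    have hd1R : ∀ (hR1 : T.Adj (f i) (f (i + 1))), dep (f (i + 1)) + 1 = h := by
      intro hR1
      have := hle (i + 1)
      rcases F1 hR1.symm with hh | hh <;> omega
    have hdR2 : ∀ (r1 : T.Adj (f i) (m i)) (r2 : T.Adj (m i) (f (i + 1))),
        dep (m i) + 1 = h :=
      fun r1 r2 => hshallow (f i) (f (i + 1)) (m i) r1 r2 (hne11 i) hdi (hle (i + 1))
    have hdL2 : ∀ (l1 : T.Adj (f (i - 1)) (m (i - 1))) (l2 : T.Adj (m (i - 1)) (f i)),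
        dep (m (i - 1)) + 1 = h := by
      intro l1 l2
      exact hshallow (f i) (f (i - 1)) (m (i - 1)) l2.symm l1.symm hprev.symm hdi (hle (i - 1))
    rcases hL with ⟨hL1, -⟩ | ⟨l1, l2, l3, l4⟩
    · rcases hR with ⟨hR1, -⟩ | ⟨r1, r2, r3, r4⟩
      · exfalso
        have heq := F2 hL1.symm hR1
          (by have := hd1L hL1; omega) (by have := hd1R hR1; omega)
        exact htwo (by linear_combination - (hinj heq))
      · exfalso
        have heq : f (i - 1) = m i := F2 hL1.symm r1
          (by have := hd1L hL1; omega) (by have := hdR2 r1 r2; omega)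
        rw [← heq] at r4
        exact hnchord i r4
    · rcases hR with ⟨hR1, -⟩ | ⟨r1, r2, r3, r4⟩
      · exfalso
        have heq : m (i - 1) = f (i + 1) := F2 l2.symm hR1
          (by have := hdL2 l1 l2; omega) (by have := hd1R hR1; omega)
        rw [heq] at l3
        exact hnchord i l3
      · have heq : m (i - 1) = m i := F2 l2.symm r1
          (by have := hdL2 l1 l2; omega) (by have := hdR2 r1 r2; omega)
        refine ⟨heq, ?_, ?_, r2, hdR2 r1 r2⟩
        · rw [← heq]; exact l1.symm
        · exact r1.symm
  have hcast : ∀ j : ZMod k, ((j.val : ℕ) : ZMod k) = j := fun j => ZMod.natCast_rightInverse j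
  by_cases hall : ∀ i : ZMod k, dep (f i) = h
  · -- all vertices deep: chain all the way around
    have hchain : ∀ i : ZMod k, m (i - 1) = m i := fun i => (step5 i (hall i)).1
    have hnat : ∀ t : ℕ, m (i0 + (t : ZMod k)) = m i0 := by
      intro t
      induction t with
      | zero => simp
      | succ n ih =>
        have hc := hchain (i0 + (n : ZMod k) + 1)
        have e : i0 + (n : ZMod k) + 1 - 1 = i0 + (n : ZMod k) := by ring
        rw [e] at hc
        have e2 : i0 + ((n + 1 : ℕ) : ZMod k) = i0 + (n : ZMod k) + 1 := by push_cast; ring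
        rw [e2, ← hc]
        exact ih
    refine ⟨m i0, fun j => ?_⟩
    have h5 := (step5 j (hall j)).2.2.1
    have hmj : m j = m i0 := by
      have := hnat (j - i0).val
      rwa [hcast (j - i0), add_sub_cancel] at this
    rwa [hmj] at h5
  · push_neg at hall
    obtain ⟨j0, hj0⟩ := hall
    have hex2 : ∃ t : ℕ, dep (f (i0 + (t : ZMod k))) ≠ h := by
      refine ⟨(j0 - i0).val, ?_⟩
      rw [hcast (j0 - i0), add_sub_cancel]
      exact hj0
    have hex1 : ∃ t : ℕ, dep (f (i0 - (t : ZMod k))) ≠ h := by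
      refine ⟨(i0 - j0).val, ?_⟩
      rw [hcast (i0 - j0)]
      have e : i0 - (i0 - j0) = j0 := by ring
      rw [e]; exact hj0
    set t2 : ℕ := Nat.find hex2 with ht2
    set t1 : ℕ := Nat.find hex1 with ht1
    have hP2 : ∀ s : ℕ, s < t2 → dep (f (i0 + (s : ZMod k))) = h := by
      intro s hs
      have := Nat.find_min hex2 hs
      exact not_not.mp this
    have hP1 : ∀ s : ℕ, s < t1 → dep (f (i0 - (s : ZMod k))) = h := by
      intro s hs
      have := Nat.find_min hex1 hs
      exact not_not.mp this
    have ht2pos : 0 < t2 := by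
      rcases Nat.eq_zero_or_pos t2 with h0 | h0
      · exfalso; have := Nat.find_spec hex2; rw [← ht2, h0] at this; simp at this
        exact this hdeep0
      · exact h0
    have ht1pos : 0 < t1 := by
      rcases Nat.eq_zero_or_pos t1 with h0 | h0
      · exfalso; have := Nat.find_spec hex1; rw [← ht1, h0] at this; simp at this
        exact this hdeep0
      · exact h0
    have ht2lt : t2 < k := by
      have hb : t2 ≤ (j0 - i0).val := by
        apply Nat.find_le
        rw [hcast (j0 - i0), add_sub_cancel]
        exact hj0
      have := (j0 - i0).val_lt
      omega
    have ht1lt : t1 < k := by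
      have hb : t1 ≤ (i0 - j0).val := by
        apply Nat.find_le
        rw [hcast (i0 - j0)]
        have e : i0 - (i0 - j0) = j0 := by ring
        rw [e]; exact hj0
      have := (i0 - j0).val_lt
      omega
    have hm2 : ∀ s : ℕ, s < t2 → m (i0 + (s : ZMod k)) = m i0 := by
      intro s
      induction s with
      | zero => intro _; simp
      | succ n ih =>
        intro hlt
        have h5 := (step5 (i0 + ((n + 1 : ℕ) : ZMod k)) (hP2 (n + 1) hlt)).1
        have e : i0 + ((n + 1 : ℕ) : ZMod k) - 1 = i0 + (n : ZMod k) := by push_cast; ring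
        have e2 : i0 + ((n + 1 : ℕ) : ZMod k) = i0 + (n : ZMod k) + 1 := by push_cast; ring
        rw [e] at h5
        rw [← h5]
        exact ih (by omega)
    have hm1 : ∀ s : ℕ, s < t1 → m (i0 - (s : ZMod k)) = m i0 ∧ m (i0 - (s : ZMod k) - 1) = m i0 := by
      intro s
      induction s with
      | zero =>
        intro _
        constructor
        · simp
        · have h5 := (step5 i0 hdeep0).1
          simpa using h5
      | succ n ih =>
        intro hlt
        obtain ⟨ih1, ih2⟩ := ih (by omega)
        have e : i0 - ((n + 1 : ℕ) : ZMod k) = i0 - (n : ZMod k) - 1 := by push_cast; ring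
        have h5 := (step5 (i0 - ((n + 1 : ℕ) : ZMod k)) (hP1 (n + 1) hlt)).1
        constructor
        · rw [e]; exact ih2
        · rw [e] at h5 ⊢
          rw [h5]
          exact ih2
    -- right boundary
    have hbR : T.Adj (m i0) (f (i0 + (t2 : ZMod k))) ∧
        dep (f (i0 + (t2 : ZMod k))) + 1 = dep (m i0) := by
      have h5 := step5 (i0 + ((t2 - 1 : ℕ) : ZMod k)) (hP2 (t2 - 1) (by omega))
      have hmm := hm2 (t2 - 1) (by omega)
      have e : i0 + ((t2 - 1 : ℕ) : ZMod k) + 1 = i0 + (t2 : ZMod k) := by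
        have : ((t2 - 1 : ℕ) : ZMod k) + 1 = (t2 : ZMod k) := by
          have : (((t2 - 1) + 1 : ℕ) : ZMod k) = (t2 : ZMod k) := by
            congr 1; omega
          push_cast at this
          linear_combination this
        linear_combination this
      have hadj := h5.2.2.2.1
      rw [e, hmm] at hadj
      have hdm : dep (m i0) + 1 = h := by
        have := h5.2.2.2.2; rwa [hmm] at this
      refine ⟨hadj, ?_⟩
      have hspec := Nat.find_spec hex2
      rw [← ht2] at hspec
      have := hle (i0 + (t2 : ZMod k))
      rcases F1 hadj with hh | hh
      · omega
      · omega
    -- left boundary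
    have hbL : T.Adj (m i0) (f (i0 - (t1 : ZMod k))) ∧
        dep (f (i0 - (t1 : ZMod k))) + 1 = dep (m i0) := by
      have h5 := step5 (i0 - ((t1 - 1 : ℕ) : ZMod k)) (hP1 (t1 - 1) (by omega))
      have hmm := (hm1 (t1 - 1) (by omega)).1
      have e : i0 - ((t1 - 1 : ℕ) : ZMod k) - 1 = i0 - (t1 : ZMod k) := by
        have : (((t1 - 1) + 1 : ℕ) : ZMod k) = (t1 : ZMod k) := by congr 1; omega
        push_cast at this
        linear_combination - this
      have hadj := h5.2.1
      rw [e, hmm] at hadj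
      have hdm : dep (m i0) + 1 = h := by
        have := h5.2.2.2.2; rwa [hmm] at this
      refine ⟨hadj, ?_⟩
      have hspec := Nat.find_spec hex1
      rw [← ht1] at hspec
      have := hle (i0 - (t1 : ZMod k))
      rcases F1 hadj with hh | hh
      · omega
      · omega
    -- wrap-around identity
    have hwrap : t1 + t2 = k := by
      have heq : f (i0 + (t2 : ZMod k)) = f (i0 - (t1 : ZMod k)) :=
        F2 hbR.1 hbL.1 hbR.2 hbL.2
      have hz : ((t1 + t2 : ℕ) : ZMod k) = 0 := by
        have := hinj heq
        push_cast
        linear_combination this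
      have hdvd := (ZMod.natCast_eq_zero_iff (t1 + t2) k).mp hz
      exact Nat.eq_of_dvd_of_lt_two_mul (by omega) hdvd (by omega)
    -- coverage
    refine ⟨m i0, fun j => ?_⟩
    have hjval : j = i0 + (((j - i0).val : ℕ) : ZMod k) := by
      rw [hcast (j - i0)]; ring
    set s : ℕ := (j - i0).val with hs
    have hslt : s < k := (j - i0).val_lt
    by_cases hcase : s < t2
    · have h5 := (step5 (i0 + (s : ZMod k)) (hP2 s hcase)).2.2.1
      rw [hm2 s hcase] at h5
      rwa [← hjval] at h5
    · have hs2 : ((s : ℕ) : ZMod k) = - (((k - s : ℕ) : ZMod k)) := by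
        have : (((k - s) + s : ℕ) : ZMod k) = 0 := by
          rw [Nat.sub_add_cancel hslt.le]
          exact ZMod.natCast_self k
        push_cast at this
        linear_combination this
      set s' : ℕ := k - s with hs'
      have hjval' : j = i0 - ((s' : ℕ) : ZMod k) := by
        rw [hjval, hs2]; ring
      have hs'le : s' ≤ t1 := by omega
      by_cases hcase2 : s' < t1
      · have h5 := (step5 (i0 - (s' : ZMod k)) (hP1 s' hcase2)).2.2.1
        rw [(hm1 s' hcase2).1] at h5
        rwa [← hjval'] at h5
      · have hst1 : s' = t1 := by omega
        rw [hjval', hst1]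
        exact hbL.1
end Star

lemma fin3_eq (p q x y : Fin 3) (h1 : p ≠ x) (h2 : p ≠ y) (h3 : q ≠ x) (h4 : q ≠ y)
    (h5 : x ≠ y) : p = q := by revert p q x y; decide

lemma fin3_force (p x y z : Fin 3) (hpx : p ≠ x) (hpy : p ≠ y) (hxy : x ≠ y) (hxz : x ≠ z)
    (hyz : y ≠ z) : p = z := by revert p x y z; decide

def prismIdx : ZMod 4 → ZMod 6 := fun i => ![0, 2, 5, 3] ⟨i.val, i.val_lt⟩

section Holes
variable {V : Type*} [DecidableEq V] {G T : SimpleGraph V}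

lemma no_odd_hole (hsub : T ≤ G) (htree : T.IsTree)
    (hpath : ∀ u v : V, G.Adj u v → ∀ p : T.Path u v, ∀ w ∈ p.1.support,
      w ≠ u → w ≠ v → G.Adj u w ∧ G.Adj v w)
    (hcol : G.Colorable 3) {k : ℕ} (hodd : Odd k) (hk5 : 5 ≤ k) (f : ZMod k → V) :
    ¬ IsInducedCycleOn G f := by
  intro hf
  haveI : NeZero k := ⟨by omega⟩
  obtain ⟨a, ha⟩ := star_of_hole hsub htree hpath (hcol.cliqueFree (by omega)) (by omega) f hf
  obtain ⟨c⟩ := hcol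
  have hGa : ∀ i : ZMod k, G.Adj a (f i) := fun i => hsub (ha i)
  have hconsec : ∀ i : ZMod k, G.Adj (f i) (f (i + 1)) :=
    fun i => (hf.2 i (i + 1)).mpr (Or.inl rfl)
  have hstep : ∀ i : ZMod k, c (f (i + 2)) = c (f i) := by
    intro i
    have e : i + 2 = i + 1 + 1 := by ring
    refine fin3_eq _ _ (c (f (i + 1))) (c a) ?_ ?_ ?_ ?_ ?_
    · rw [e]; exact (c.valid (hconsec (i + 1))).symm
    · exact (c.valid (hGa (i + 2))).symm
    · exact c.valid (hconsec i)
    · exact (c.valid (hGa i)).symm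
    · exact (c.valid (hGa (i + 1))).symm
  have h2t : ∀ t : ℕ, c (f ((2 * t : ℕ) : ZMod k)) = c (f 0) := by
    intro t
    induction t with
    | zero => simp
    | succ n ih =>
      have e : ((2 * (n + 1) : ℕ) : ZMod k) = ((2 * n : ℕ) : ZMod k) + 2 := by
        push_cast; ring
      rw [e, hstep]
      exact ih
  obtain ⟨mm, hmm⟩ := hodd
  have e2 : ((2 * (mm + 1) : ℕ) : ZMod k) = 1 := by
    have e3 : (2 * (mm + 1) : ℕ) = k + 1 := by omega
    rw [e3]
    push_cast
    rw [ZMod.natCast_self]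
    ring
  have := h2t (mm + 1)
  rw [e2] at this
  have hadj := c.valid (hconsec 0)
  rw [zero_add] at hadj
  exact hadj this.symm

lemma anti_big {k : ℕ} (hcol : G.Colorable 3) (hk : 7 ≤ k) (f : ZMod k → V) :
    ¬ IsInducedAnticycleOn G f := by
  intro hf
  haveI : NeZero k := ⟨by omega⟩
  obtain ⟨c⟩ := hcol
  have hone : (1 : ZMod k) ≠ 0 := by
    have := zmod_ne_zero k 1 (by omega) (by omega); simpa using this
  have hthree : (3 : ZMod k) ≠ 0 := by
    have := zmod_ne_zero k 3 (by omega) (by omega); simpa using this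
  have hcons : ∀ i j : ZMod k, i ≠ j → c (f i) = c (f j) → j = i + 1 ∨ i = j + 1 := by
    intro i j hne hcc
    by_contra hcon
    exact c.valid ((hf.2 i j).mpr ⟨hne, hcon⟩) hcc
  have hsmall : ∀ col : Fin 3,
      (Finset.univ.filter (fun i : ZMod k => c (f i) = col)).card ≤ 2 := by
    intro col
    by_contra hgt
    push_neg at hgt
    obtain ⟨x, y, z, hx, hy, hz, hxy, hxz, hyz⟩ := Finset.two_lt_card_iff.mp hgt
    simp only [Finset.mem_filter, Finset.mem_univ, true_and] at hx hy hz
    have h1 := hcons x y hxy (hx.trans hy.symm)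
    have h2 := hcons x z hxz (hx.trans hz.symm)
    have h3 := hcons y z hyz (hy.trans hz.symm)
    rcases h1 with h1 | h1
    · rcases h2 with h2 | h2
      · exact hyz (h1.trans h2.symm)
      · rcases h3 with h3 | h3
        · exact hthree (by linear_combination - h1 - h2 - h3)
        · exact hxy (by linear_combination h2 - h3)
    · rcases h2 with h2 | h2
      · rcases h3 with h3 | h3
        · exact hone (by linear_combination - h1 - h2 + h3)
        · exact hthree (by linear_combination - h1 - h2 - h3)
      · exact hyz (by linear_combination h2 - h1)
  have hcard : (Finset.univ : Finset (ZMod k)).card = k := by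
    rw [Finset.card_univ, ZMod.card]
  have hfib := Finset.card_eq_sum_card_fiberwise
    (f := fun i : ZMod k => c (f i)) (s := Finset.univ) (t := Finset.univ)
    (fun x _ => Finset.mem_univ _)
  have hsum : (∑ b ∈ (Finset.univ : Finset (Fin 3)),
      (Finset.univ.filter (fun i : ZMod k => c (f i) = b)).card) ≤ 6 := by
    calc (∑ b ∈ (Finset.univ : Finset (Fin 3)),
        (Finset.univ.filter (fun i : ZMod k => c (f i) = b)).card)
        ≤ ∑ _b ∈ (Finset.univ : Finset (Fin 3)), 2 :=
          Finset.sum_le_sum (fun b _ => hsmall b)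
      _ = 6 := by simp
  have hk6 : k ≤ 6 := by
    rw [← hcard, hfib]
    exact hsum
  omega

lemma anti_six (hsub : T ≤ G) (htree : T.IsTree)
    (hpath : ∀ u v : V, G.Adj u v → ∀ p : T.Path u v, ∀ w ∈ p.1.support,
      w ≠ u → w ≠ v → G.Adj u w ∧ G.Adj v w)
    (hcol : G.Colorable 3) (f : ZMod 6 → V) : ¬ IsInducedAnticycleOn G f := by
  intro hf
  have key1 : ∀ i j : ZMod 4, prismIdx i = prismIdx j → i = j := by decide
  have key2 : ∀ i j : ZMod 4,
      (prismIdx i ≠ prismIdx j ∧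
        ¬ (prismIdx j = prismIdx i + 1 ∨ prismIdx i = prismIdx j + 1)) ↔
      (j = i + 1 ∨ i = j + 1) := by decide
  have hgcyc : IsInducedCycleOn G (fun i : ZMod 4 => f (prismIdx i)) := by
    constructor
    · intro i j hij
      exact key1 i j (hf.1 hij)
    · intro i j
      rw [hf.2 (prismIdx i) (prismIdx j)]
      exact key2 i j
  obtain ⟨a, ha⟩ := star_of_hole hsub htree hpath (hcol.cliqueFree (by omega)) (by omega)
    _ hgcyc
  obtain ⟨c⟩ := hcol
  have hGa : ∀ i : ZMod 4, G.Adj a (f (prismIdx i)) := fun i => hsub (ha i)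
  have hadjf : ∀ i j : ZMod 6, (i ≠ j ∧ ¬ (j = i + 1 ∨ i = j + 1)) → G.Adj (f i) (f j) :=
    fun i j hc => (hf.2 i j).mpr hc
  have hga0 : G.Adj a (f 0) := by have := hGa 0; rwa [show prismIdx 0 = 0 by decide] at this
  have hga2 : G.Adj a (f 2) := by have := hGa 1; rwa [show prismIdx 1 = 2 by decide] at this
  have hga5 : G.Adj a (f 5) := by have := hGa 2; rwa [show prismIdx 2 = 5 by decide] at this
  have hga3 : G.Adj a (f 3) := by have := hGa 3; rwa [show prismIdx 3 = 3 by decide] at this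
  have ht024 : c (f 0) ≠ c (f 2) ∧ c (f 0) ≠ c (f 4) ∧ c (f 2) ≠ c (f 4) :=
    ⟨c.valid (hadjf 0 2 (by decide)), c.valid (hadjf 0 4 (by decide)),
      c.valid (hadjf 2 4 (by decide))⟩
  have ht135 : c (f 1) ≠ c (f 3) ∧ c (f 1) ≠ c (f 5) ∧ c (f 3) ≠ c (f 5) :=
    ⟨c.valid (hadjf 1 3 (by decide)), c.valid (hadjf 1 5 (by decide)),
      c.valid (hadjf 3 5 (by decide))⟩
  have hwz : c a = c (f 4) :=
    fin3_force (c a) (c (f 0)) (c (f 2)) (c (f 4)) (c.valid hga0) (c.valid hga2)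
      ht024.1 ht024.2.1 ht024.2.2
  have hwz2 : c a = c (f 1) :=
    fin3_force (c a) (c (f 5)) (c (f 3)) (c (f 1)) (c.valid hga5) (c.valid hga3)
      ht135.2.2.symm ht135.2.1.symm ht135.1.symm
  have hadj14 : G.Adj (f 1) (f 4) := hadjf 1 4 (by decide)
  exact c.valid hadj14 (hwz2.symm.trans hwz)

lemma anti_five (hsub : T ≤ G) (htree : T.IsTree)
    (hpath : ∀ u v : V, G.Adj u v → ∀ p : T.Path u v, ∀ w ∈ p.1.support,
      w ≠ u → w ≠ v → G.Adj u w ∧ G.Adj v w)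
    (hcol : G.Colorable 3) (f : ZMod 5 → V) : ¬ IsInducedAnticycleOn G f := by
  intro hf
  have key1 : ∀ i j : ZMod 5, (2 * i : ZMod 5) = 2 * j → i = j := by decide
  have key2 : ∀ i j : ZMod 5,
      ((2 * i : ZMod 5) ≠ 2 * j ∧ ¬ ((2 * j : ZMod 5) = 2 * i + 1 ∨ (2 * i : ZMod 5) = 2 * j + 1))
        ↔ (j = i + 1 ∨ i = j + 1) := by decide
  have hgcyc : IsInducedCycleOn G (fun i : ZMod 5 => f (2 * i)) := by
    constructor
    · intro i j hij
      exact key1 i j (hf.1 hij)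
    · intro i j
      rw [hf.2 (2 * i) (2 * j)]
      exact key2 i j
  exact no_odd_hole hsub htree hpath hcol (by decide) (by omega) _ hgcyc

end Holes

section OddClosed
variable {W : Type*} {H : SimpleGraph W}

private def IsClosedSeq (H : SimpleGraph W) {n : ℕ} (g : ZMod n → W) : Prop :=
  ∀ i : ZMod n, H.Adj (g i) (g (i + 1))

lemma closedseq_cast {n : ℕ} [NeZero n] (t : ℕ) :
    ((t + 1 : ℕ) : ZMod n) = ((t : ℕ) : ZMod n) + 1 := by push_cast; ring

lemma splice {n : ℕ} (hn : 0 < n) (g : ZMod n → W) (hg : IsClosedSeq H g) (a : ℕ)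
    (ha : 0 < a) (hadj : H.Adj (g ((a : ℕ) : ZMod n)) (g 0)) :
    ∃ g' : ZMod (a + 1) → W, IsClosedSeq H g' := by
  haveI : NeZero n := ⟨by omega⟩
  haveI : NeZero (a + 1) := ⟨by omega⟩
  refine ⟨fun t => g ((t.val : ℕ) : ZMod n), fun t => ?_⟩
  have htlt : t.val < a + 1 := t.val_lt
  have hv1 : (1 : ZMod (a + 1)).val = 1 := ZMod.val_one'' (by omega)
  have hvadd : (t + 1).val = (t.val + 1) % (a + 1) := by
    rw [ZMod.val_add, hv1]
  show H.Adj (g ((t.val : ℕ) : ZMod n)) (g (((t + 1).val : ℕ) : ZMod n))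
  by_cases hend : t.val = a
  · have h0 : (t + 1).val = 0 := by rw [hvadd, hend]; simp
    rw [h0, hend]
    simpa using hadj
  · have hlt : t.val + 1 < a + 1 := by omega
    have h1 : (t + 1).val = t.val + 1 := by rw [hvadd, Nat.mod_eq_of_lt hlt]
    rw [h1, closedseq_cast]
    exact hg _

lemma cutloop {n : ℕ} (hn : 0 < n) (g : ZMod n → W) (hg : IsClosedSeq H g) (a : ℕ)
    (ha : 2 ≤ a) (heq : g ((a : ℕ) : ZMod n) = g 0) :
    ∃ g' : ZMod a → W, IsClosedSeq H g' := by
  haveI : NeZero n := ⟨by omega⟩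
  haveI : NeZero a := ⟨by omega⟩
  refine ⟨fun t => g ((t.val : ℕ) : ZMod n), fun t => ?_⟩
  have htlt : t.val < a := t.val_lt
  have hv1 : (1 : ZMod a).val = 1 := ZMod.val_one'' (by omega)
  have hvadd : (t + 1).val = (t.val + 1) % a := by rw [ZMod.val_add, hv1]
  show H.Adj (g ((t.val : ℕ) : ZMod n)) (g (((t + 1).val : ℕ) : ZMod n))
  by_cases hend : t.val = a - 1
  · have h0 : (t + 1).val = 0 := by rw [hvadd, hend]; simp [Nat.sub_add_cancel (by omega : 1 ≤ a)]
    rw [h0, hend]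
    have := hg ((a - 1 : ℕ) : ZMod n)
    rw [← closedseq_cast, Nat.sub_add_cancel (by omega : 1 ≤ a), heq] at this
    simpa using this
  · have hlt : t.val + 1 < a := by omega
    have h1 : (t + 1).val = t.val + 1 := by rw [hvadd, Nat.mod_eq_of_lt hlt]
    rw [h1, closedseq_cast]
    exact hg _

lemma shift_closed {n : ℕ} (g : ZMod n → W) (hg : IsClosedSeq H g) (i : ZMod n) :
    IsClosedSeq H (fun t => g (i + t)) := by
  intro t
  have := hg (i + t)
  simpa [add_assoc] using this

lemma exists_induced_odd (hW : ∃ n : ℕ, 0 < n ∧ Odd n ∧ ∃ g : ZMod n → W, IsClosedSeq H g) :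
    ∃ n : ℕ, Odd n ∧ 3 ≤ n ∧ ∃ g : ZMod n → W, Function.Injective g ∧
      ∀ i j : ZMod n, H.Adj (g i) (g j) ↔ (j = i + 1 ∨ i = j + 1) := by
  classical
  set n0 := Nat.find hW with hn0
  obtain ⟨hpos, hodd, g, hg⟩ := Nat.find_spec hW
  have hmin : ∀ m : ℕ, m < n0 → ¬ (0 < m ∧ Odd m ∧ ∃ g' : ZMod m → W, IsClosedSeq H g') :=
    fun m hm => Nat.find_min hW hm
  haveI : NeZero n0 := ⟨by omega⟩
  have hcast : ∀ j : ZMod n0, ((j.val : ℕ) : ZMod n0) = j := fun j => ZMod.natCast_rightInverse j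
  have hn1 : n0 ≠ 1 := by
    intro h1
    have h0 := hg 0
    have e1 : ((1 : ℕ) : ZMod n0) = 0 := by
      have e2 := ZMod.natCast_self n0
      rw [h1] at e2 ⊢
      exact e2
    have e : (0 : ZMod n0) + 1 = 0 := by
      push_cast at e1
      rw [zero_add, e1]
    rw [e] at h0
    exact H.irrefl h0
  have hn3 : 3 ≤ n0 := by
    have hp := Nat.odd_iff.mp hodd
    omega
  -- no repeated vertices
  have hdist : Function.Injective g := by
    intro i j heq
    by_contra hne
    have hvne : (j - i).val ≠ 0 := fun h => hne (by
      have := (ZMod.val_eq_zero (j - i)).mp h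
      have h2 : j = i := by linear_combination this
      exact h2.symm)
    set a := (j - i).val with hadef
    have halt : a < n0 := (j - i).val_lt
    have hga : g (i + ((a : ℕ) : ZMod n0)) = g (i + 0) := by
      rw [hcast (j - i)]
      rw [show i + (j - i) = j by ring, add_zero]
      exact heq.symm
    -- a = 1 would identify adjacent vertices
    have ha1 : a ≠ 1 := by
      intro h1
      have : j = i + 1 := by
        have : ((a : ℕ) : ZMod n0) = j - i := hcast (j - i)
        rw [h1] at this
        push_cast at this
        linear_combination - this
      have hadji := hg i
      rw [← this] at hadji
      exact hadji.ne (heq)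
    have hb1 : n0 - a ≠ 1 := by
      intro h1
      have hj : i = j + 1 := by
        have h2 : ((a : ℕ) : ZMod n0) = j - i := hcast (j - i)
        have h3 : ((n0 - a : ℕ) : ZMod n0) + ((a : ℕ) : ZMod n0) = 0 := by
          rw [← Nat.cast_add, Nat.sub_add_cancel halt.le, ZMod.natCast_self]
        rw [h1] at h3
        push_cast at h3
        linear_combination h2 - h3
      have hadjj := hg j
      rw [← hj] at hadjj
      exact hadjj.ne heq.symm
    have ha2 : 2 ≤ a := by omega
    have hb2 : 2 ≤ n0 - a := by omega
    -- two shorter closed sequences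
    obtain ⟨g1, hg1⟩ := cutloop hpos (fun t => g (i + t)) (shift_closed g hg i) a ha2 hga
    have hgb : g (j + ((n0 - a : ℕ) : ZMod n0)) = g (j + 0) := by
      have h3 : ((n0 - a : ℕ) : ZMod n0) = - ((a : ℕ) : ZMod n0) := by
        have h4 : ((n0 - a : ℕ) : ZMod n0) + ((a : ℕ) : ZMod n0) = 0 := by
          rw [← Nat.cast_add, Nat.sub_add_cancel halt.le, ZMod.natCast_self]
        linear_combination h4
      rw [h3, hcast (j - i)]
      rw [show j + -(j - i) = i by ring, add_zero]
      exact heq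
    obtain ⟨g2, hg2⟩ := cutloop hpos (fun t => g (j + t)) (shift_closed g hg j) (n0 - a) hb2 hgb
    have hparity : a % 2 = 1 ∨ (n0 - a) % 2 = 1 := by
      have := Nat.odd_iff.mp hodd
      omega
    rcases hparity with hp | hp
    · exact hmin a halt ⟨by omega, Nat.odd_iff.mpr hp, g1, hg1⟩
    · exact hmin (n0 - a) (by omega) ⟨by omega, Nat.odd_iff.mpr hp, g2, hg2⟩
  -- inducedness
  have hind : ∀ i j : ZMod n0, H.Adj (g i) (g j) → (j = i + 1 ∨ i = j + 1) := by
    intro i j hadj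
    by_contra hcon
    push_neg at hcon
    obtain ⟨hc1, hc2⟩ := hcon
    have hne : i ≠ j := by
      rintro rfl
      exact H.irrefl hadj
    have hvne : (j - i).val ≠ 0 := fun h => hne (by
      have := (ZMod.val_eq_zero (j - i)).mp h
      have h2 : j = i := by linear_combination this
      exact h2.symm)
    set a := (j - i).val with hadef
    have halt : a < n0 := (j - i).val_lt
    have hcastji : ((a : ℕ) : ZMod n0) = j - i := hcast (j - i)
    have ha1 : a ≠ 1 := by
      intro h1
      apply hc1
      rw [h1] at hcastji
      push_cast at hcastji
      linear_combination - hcastji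
    have hb1 : n0 - a ≠ 1 := by
      intro h1
      apply hc2
      have h3 : ((n0 - a : ℕ) : ZMod n0) + ((a : ℕ) : ZMod n0) = 0 := by
        rw [← Nat.cast_add, Nat.sub_add_cancel halt.le, ZMod.natCast_self]
      rw [h1] at h3
      push_cast at h3
      linear_combination hcastji - h3
    have ha2 : 2 ≤ a := by omega
    have hb2 : 2 ≤ n0 - a := by omega
    have hsplA : H.Adj (g (i + ((a : ℕ) : ZMod n0))) (g (i + 0)) := by
      rw [hcastji, show i + (j - i) = j by ring, add_zero]
      exact hadj.symm
    obtain ⟨g1, hg1⟩ := splice hpos (fun t => g (i + t)) (shift_closed g hg i) a (by omega) hsplA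
    have hsplB : H.Adj (g (j + ((n0 - a : ℕ) : ZMod n0))) (g (j + 0)) := by
      have h3 : ((n0 - a : ℕ) : ZMod n0) = - ((a : ℕ) : ZMod n0) := by
        have h4 : ((n0 - a : ℕ) : ZMod n0) + ((a : ℕ) : ZMod n0) = 0 := by
          rw [← Nat.cast_add, Nat.sub_add_cancel halt.le, ZMod.natCast_self]
        linear_combination h4
      rw [h3, hcastji, show j + -(j - i) = i by ring, add_zero]
      exact hadj
    obtain ⟨g2, hg2⟩ := splice hpos (fun t => g (j + t)) (shift_closed g hg j) (n0 - a)
      (by omega) hsplB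
    have hparity : (a + 1) % 2 = 1 ∨ (n0 - a + 1) % 2 = 1 := by
      have := Nat.odd_iff.mp hodd
      omega
    rcases hparity with hp | hp
    · exact hmin (a + 1) (by omega) ⟨by omega, Nat.odd_iff.mpr hp, g1, hg1⟩
    · exact hmin (n0 - a + 1) (by omega) ⟨by omega, Nat.odd_iff.mpr hp, g2, hg2⟩
  refine ⟨n0, hodd, hn3, g, hdist, fun i j => ⟨hind i j, ?_⟩⟩
  rintro (rfl | rfl)
  · exact hg i
  · exact (hg j).symm

end OddClosed

section TwoColor
variable {W : Type*} {H : SimpleGraph W}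

lemma colorable_two_of_no_odd (H : SimpleGraph W)
    (hno : ∀ n : ℕ, 0 < n → Odd n → ∀ g : ZMod n → W, ¬ IsClosedSeq H g) :
    H.Colorable 2 := by
  classical
  refine ⟨Coloring.mk (fun v => ⟨H.dist ((H.connectedComponentMk v).out) v % 2, by omega⟩) ?_⟩
  intro u v hadj hcc
  have hcomp : H.connectedComponentMk u = H.connectedComponentMk v :=
    ConnectedComponent.sound hadj.reachable
  have hcc' : H.dist ((H.connectedComponentMk u).out) u % 2
      = H.dist ((H.connectedComponentMk v).out) v % 2 := by
    have := congrArg Fin.val hcc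
    simpa using this
  rw [← hcomp] at hcc'
  set r0 := (H.connectedComponentMk u).out with hr0
  have hru : H.Reachable r0 u := by
    have h2 : H.connectedComponentMk r0 = H.connectedComponentMk u := Quot.out_eq _
    exact (ConnectedComponent.eq).mp h2
  have hrv : H.Reachable r0 v := hru.trans hadj.reachable
  obtain ⟨pu, hpu⟩ := hru.exists_walk_length_eq_dist
  obtain ⟨pv, hpv⟩ := hrv.exists_walk_length_eq_dist
  set Wk := (pu.reverse.append pv).concat hadj.symm with hWk
  have hlen : Wk.length = H.dist r0 u + H.dist r0 v + 1 := by
    simp [hWk, Walk.length_concat, Walk.length_append, Walk.length_reverse, hpu, hpv]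
  have hlpos : 0 < Wk.length := by omega
  have hlodd : Odd Wk.length := by rw [Nat.odd_iff, hlen]; omega
  have hne1 : Wk.length ≠ 1 := by
    intro h1
    have h2 : H.dist r0 u = 0 ∧ H.dist r0 v = 0 := by omega
    have e1 := hru.dist_eq_zero_iff.mp h2.1
    have e2 := hrv.dist_eq_zero_iff.mp h2.2
    exact hadj.ne (e1 ▸ e2)
  haveI : NeZero Wk.length := ⟨by omega⟩
  refine hno Wk.length hlpos hlodd (fun t => Wk.getVert t.val) ?_
  intro t
  show H.Adj (Wk.getVert t.val) (Wk.getVert (t + 1).val)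
  have htlt : t.val < Wk.length := t.val_lt
  have hv1 : (1 : ZMod Wk.length).val = 1 := ZMod.val_one'' hne1
  have hvadd : (t + 1).val = (t.val + 1) % Wk.length := by rw [ZMod.val_add, hv1]
  by_cases hend : t.val + 1 = Wk.length
  · have h0 : (t + 1).val = 0 := by rw [hvadd, hend, Nat.mod_self]
    rw [h0]
    have hstep := Wk.adj_getVert_succ htlt
    rw [hend, Walk.getVert_length] at hstep
    rw [Walk.getVert_zero]
    exact hstep
  · have h1 : (t + 1).val = t.val + 1 := by rw [hvadd, Nat.mod_eq_of_lt (by omega)]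
    rw [h1]
    exact Wk.adj_getVert_succ htlt

end TwoColor

lemma cliqueNum_le_of_cliqueFree' {α : Type*} [Fintype α] {H : SimpleGraph α} {n : ℕ}
    (h : H.CliqueFree (n + 1)) : H.cliqueNum ≤ n := by
  by_contra hlt
  push_neg at hlt
  obtain ⟨t, ht⟩ := H.exists_isNClique_cliqueNum
  obtain ⟨t', ht's, ht'c⟩ := Finset.exists_subset_card_eq
    (show n + 1 ≤ t.card by rw [ht.2]; omega)
  exact h t' ⟨ht.1.subset (by exact_mod_cast ht's), ht'c⟩

lemma hole_free_perfect {V : Type*} [Fintype V] (G : SimpleGraph V) (hcol : G.Colorable 3)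
    (hholes : ∀ k : ℕ, Odd k → 5 ≤ k → ∀ f : ZMod k → V, ¬ IsInducedCycleOn G f) :
    IsPerfect G := by
  classical
  intro s
  haveI : Fintype ↥s := (Set.toFinite s).fintype
  have hHcol : (G.induce s).Colorable 3 := Colorable.of_hom (Embedding.induce s).toHom hcol
  by_cases hempty : IsEmpty ↥s
  · have h1 : (G.induce s).chromaticNumber = 0 := chromaticNumber_eq_zero_iff.mpr hempty
    have h2 : (G.induce s).cliqueNum = 0 := by
      obtain ⟨t, ht⟩ := (G.induce s).exists_isNClique_cliqueNum
      rw [← ht.2, Finset.eq_empty_of_isEmpty t, Finset.card_empty]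
    rw [h1, h2]
    rfl
  haveI hnev : Nonempty ↥s := not_isEmpty_iff.mp hempty
  have hlb : ∀ (n : ℕ) (t : Finset ↥s), (G.induce s).IsNClique n t →
      (n : ℕ∞) ≤ (G.induce s).chromaticNumber := by
    intro n t ht
    by_contra hlt
    push_neg at hlt
    exact (cliqueFree_of_chromaticNumber_lt hlt) t ht
  have hwlb : ∀ (n : ℕ) (t : Finset ↥s), (G.induce s).IsNClique n t →
      n ≤ (G.induce s).cliqueNum := by
    intro n t ht
    rw [← ht.2]
    exact IsClique.card_le_cliqueNum (tc := ht.1)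
  by_cases htri : ∃ t : Finset ↥s, (G.induce s).IsNClique 3 t
  · obtain ⟨t, ht⟩ := htri
    have hchi : (G.induce s).chromaticNumber = ((3 : ℕ) : ℕ∞) :=
      le_antisymm hHcol.chromaticNumber_le (hlb 3 t ht)
    have hcn : (G.induce s).cliqueNum = 3 :=
      le_antisymm (cliqueNum_le_of_cliqueFree' (hHcol.cliqueFree (by omega))) (hwlb 3 t ht)
    rw [hchi, hcn]
  · push_neg at htri
    have hcf3 : (G.induce s).CliqueFree 3 := htri
    by_cases hedge : ∃ u v : ↥s, (G.induce s).Adj u v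
    · obtain ⟨u, v, huv⟩ := hedge
      have hpair : (G.induce s).IsNClique 2 {u, v} := by
        constructor
        · intro a ha b hb hab
          simp only [Finset.coe_insert, Set.mem_insert_iff, Finset.coe_singleton,
            Set.mem_singleton_iff] at ha hb
          rcases ha with rfl | rfl <;> rcases hb with rfl | rfl <;>
            first | exact absurd rfl hab | exact huv | exact huv.symm
        · rw [Finset.card_insert_of_notMem (by simp [huv.ne]), Finset.card_singleton]
      have h2col : (G.induce s).Colorable 2 := by
        apply colorable_two_of_no_odd
        intro n hpos hodd g hgcl
        obtain ⟨n0, hodd0, h30, g0, hinj0, hiff0⟩ := exists_induced_odd ⟨n, hpos, hodd, g, hgcl⟩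
        by_cases h3 : n0 = 3
        · subst h3
          have hne01 : g0 0 ≠ g0 1 := fun h => (by decide : ¬ (0 : ZMod 3) = 1) (hinj0 h)
          have hne02 : g0 0 ≠ g0 2 := fun h => (by decide : ¬ (0 : ZMod 3) = 2) (hinj0 h)
          have hne12 : g0 1 ≠ g0 2 := fun h => (by decide : ¬ (1 : ZMod 3) = 2) (hinj0 h)
          have ha01 : (G.induce s).Adj (g0 0) (g0 1) := (hiff0 0 1).mpr (by decide)
          have ha12 : (G.induce s).Adj (g0 1) (g0 2) := (hiff0 1 2).mpr (by decide)
          have ha02 : (G.induce s).Adj (g0 0) (g0 2) := (hiff0 0 2).mpr (by decide)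
          refine hcf3 {g0 0, g0 1, g0 2} ⟨?_, ?_⟩
          · intro a ha b hb hab
            simp only [Finset.coe_insert, Set.mem_insert_iff, Finset.coe_singleton,
              Set.mem_singleton_iff] at ha hb
            rcases ha with rfl | rfl | rfl <;> rcases hb with rfl | rfl | rfl <;>
              first
                | exact absurd rfl hab
                | exact ha01
                | exact ha01.symm
                | exact ha12
                | exact ha12.symm
                | exact ha02
                | exact ha02.symm
          · rw [Finset.card_insert_of_notMem (by simp [hne01, hne02]),
              Finset.card_insert_of_notMem (by simp [hne12]), Finset.card_singleton]
        · have h50 : 5 ≤ n0 := by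
            have := Nat.odd_iff.mp hodd0
            omega
          refine hholes n0 hodd0 h50 (fun i => (g0 i : V)) ⟨?_, ?_⟩
          · intro i j hij
            exact hinj0 (Subtype.val_injective hij)
          · intro i j
            rw [← hiff0 i j]
            rfl
      have hchi : (G.induce s).chromaticNumber = ((2 : ℕ) : ℕ∞) :=
        le_antisymm h2col.chromaticNumber_le (hlb 2 _ hpair)
      have hcn : (G.induce s).cliqueNum = 2 :=
        le_antisymm (cliqueNum_le_of_cliqueFree' hcf3) (hwlb 2 _ hpair)
      rw [hchi, hcn]
    · push_neg at hedge
      have h1col : (G.induce s).Colorable 1 :=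
        ⟨Coloring.mk (fun _ => 0) (fun {a b} h => absurd h (hedge a b))⟩
      obtain ⟨x⟩ := hnev
      have hsing : (G.induce s).IsNClique 1 {x} := by
        constructor
        · intro a ha b hb hab
          simp only [Finset.coe_singleton, Set.mem_singleton_iff] at ha hb
          exact absurd (ha.trans hb.symm) hab
        · exact Finset.card_singleton x
      have hchi : (G.induce s).chromaticNumber = ((1 : ℕ) : ℕ∞) :=
        le_antisymm h1col.chromaticNumber_le (hlb 1 _ hsing)
      have hcf2 : (G.induce s).CliqueFree 2 := by
        intro t ht
        obtain ⟨a, b, hab, rfl⟩ := Finset.card_eq_two.mp ht.2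
        exact hedge a b (ht.1 (by simp) (by simp) hab)
      have hcn : (G.induce s).cliqueNum = 1 :=
        le_antisymm (cliqueNum_le_of_cliqueFree' hcf2) (hwlb 1 _ hsing)
      rw [hchi, hcn]


theorem stmt_9 {V : Type*} [Fintype V] (G T : SimpleGraph V)
    (hGconn : G.Connected) (hsub : T ≤ G) (htree : T.IsTree)
    (hpath : ∀ u v : V, G.Adj u v → ∀ p : T.Path u v, ∀ w ∈ p.1.support,
      w ≠ u → w ≠ v → G.Adj u w ∧ G.Adj v w)
    (hcol : G.Colorable 3) :
    (∀ k : ℕ, Odd k → 5 ≤ k → ∀ f : ZMod k → V, ¬ IsInducedCycleOn G f) ∧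
    (∀ k : ℕ, 5 ≤ k → ∀ f : ZMod k → V, ¬ IsInducedAnticycleOn G f) ∧
    IsPerfect G := by
  classical
  have h1 : ∀ k : ℕ, Odd k → 5 ≤ k → ∀ f : ZMod k → V, ¬ IsInducedCycleOn G f :=
    fun k hodd hk f => no_odd_hole hsub htree hpath hcol hodd hk f
  refine ⟨h1, ?_, hole_free_perfect G hcol h1⟩
  intro k hk f hf
  rcases Nat.lt_or_ge k 7 with h7 | h7
  · interval_cases k
    · exact anti_five hsub htree hpath hcol f hf
    · exact anti_six hsub htree hpath hcol f hf
  · exact anti_big hcol h7 f hf
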